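/- Let (S, d) be a metric space, let V be a countable subset of S that is dense in itself, let δ > 0 and p ∈ (0,1). Then with probability 1 with respect to the LARG(V, δ, p) product measure μ, the random graph is geometrically existentially closed at level δ; that is, μ({ω : G_ω is δ-g.e.c.}) = 1. -/

import Mathlib

open MeasureTheory Metric

/-- Pairs of distinct points of `V` at distance less than `δ`: potential edges. -/
def LargEdges {S : Type*} [MetricSpace S] (V : Set S) (δ : ℝ) : Set (Sym2 V) :=
  {e | ¬ e.IsDiag ∧ ∀ u v : V, e = s(u, v) → dist (u : S) (v : S) < δ}

/-- The graph on `V` determined by a sample `ω` of the LARG model. -/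
def largGraph {S : Type*} [MetricSpace S] (V : Set S) (δ : ℝ)
    (ω : LargEdges V δ → Bool) : SimpleGraph V where
  Adj u v := ∃ h : s(u, v) ∈ LargEdges V δ, ω ⟨s(u, v), h⟩ = true
  symm := by
    constructor
    intro u v h
    rwa [Sym2.eq_swap]
  loopless := by
    constructor
    rintro u ⟨h, -⟩
    exact h.1 (by simp)

/-- `G` is geometrically existentially closed at level `δ`. -/
def IsGEC {S : Type*} [MetricSpace S] {V : Set S} (G : SimpleGraph V) (δ : ℝ) : Prop :=
  ∀ δ' : ℝ, 0 < δ' → δ' < δ → ∀ x : V, ∀ A B : Finset V,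
    Disjoint A B → x ∉ A → x ∉ B →
    (∀ u : V, u ∈ A ∨ u ∈ B → dist (u : S) (x : S) < δ) →
    ∃ z : V, z ∉ A ∧ z ∉ B ∧ z ≠ x ∧
      (∀ a ∈ A, G.Adj z a) ∧ (∀ b ∈ B, ¬ G.Adj z b) ∧
      (∀ u : V, u ∈ A ∨ u ∈ B → dist (u : S) (z : S) < δ) ∧ dist (x : S) (z : S) < δ'

/-- `G` has threshold `δ`: adjacent vertices are at distance less than `δ`. -/
def HasThreshold {S : Type*} [MetricSpace S] {V : Set S} (G : SimpleGraph V) (δ : ℝ) : Prop :=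
  ∀ u v : V, G.Adj u v → dist (u : S) (v : S) < δ

/-- A geometric `δ`-graph: `δ`-g.e.c. with threshold `δ`. -/
def IsGeometricGraph {S : Type*} [MetricSpace S] {V : Set S} (G : SimpleGraph V) (δ : ℝ) : Prop :=
  IsGEC G δ ∧ HasThreshold G δ

/-- A set is dense in itself. -/
def DenseInItself {S : Type*} [MetricSpace S] (V : Set S) : Prop :=
  ∀ x ∈ V, ∀ ε : ℝ, 0 < ε → ∃ y ∈ V, y ≠ x ∧ dist y x < ε

/-- A graph is existentially closed. -/
def IsEC {α : Type*} (G : SimpleGraph α) : Prop :=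
  ∀ A B : Finset α, Disjoint A B →
    ∃ z : α, z ∉ A ∧ z ∉ B ∧ (∀ a ∈ A, G.Adj z a) ∧ (∀ b ∈ B, ¬ G.Adj z b)

/-- A metrically convex set. -/
def MetricConvex {S : Type*} [MetricSpace S] (C : Set S) : Prop :=
  ∀ x ∈ C, ∀ y ∈ C, ∃ z ∈ C, dist x z + dist z y = dist x y

/-- `f : V → W` is a step-isometry at level `(δ, γ)`. -/
def IsStepIsometry {S T : Type*} [MetricSpace S] [MetricSpace T]
    {V : Set S} {W : Set T} (f : V → W) (δ γ : ℝ) : Prop :=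
  Function.Surjective f ∧
    ∀ u v : V, ⌊dist (u : S) (v : S) / δ⌋ = ⌊dist ((f u : T)) ((f v : T)) / γ⌋

/-- Quotient of `v` w.r.t. offset `δ` and anchor `v₀`. -/
noncomputable def quot' (δ v₀ v : ℝ) : ℤ := ⌊(v - v₀) / δ⌋

/-- Representative of `v` w.r.t. offset `δ` and anchor `v₀`. -/
noncomputable def repr' (δ v₀ v : ℝ) : ℝ := v - v₀ - δ * ⌊(v - v₀) / δ⌋


section AuxLarg

open ProbabilityTheory Filter

variable {S : Type*} [MetricSpace S] {V : Set S} {δ : ℝ}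

lemma mem_largEdges_of {z u : ↥V} (hzu : z ≠ u) (hd : dist (z : S) (u : S) < δ) :
    s(z, u) ∈ LargEdges V δ := by
  refine ⟨?_, ?_⟩
  · rw [Sym2.mk_isDiag_iff]
    exact hzu
  · intro u' v' h
    rcases Sym2.eq_iff.mp h with ⟨h1, h2⟩ | ⟨h1, h2⟩
    · subst h1; subst h2; exact hd
    · subst h1; subst h2; rwa [dist_comm]

lemma exists_inj_seq (hVd : DenseInItself V) (x : ↥V) {ε : ℝ} (hε : 0 < ε) :
    ∃ z : ℕ → ↥V, Function.Injective z ∧ ∀ n, z n ≠ x ∧ dist ((z n : S)) (x : S) < ε := by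
  classical
  have hstep : ∀ y : {y : ↥V // y ≠ x ∧ dist (y : S) (x : S) < ε},
      ∃ y' : {y : ↥V // y ≠ x ∧ dist (y : S) (x : S) < ε},
        dist ((y' : ↥V) : S) (x : S) < dist ((y : ↥V) : S) (x : S) := by
    rintro ⟨y, hyx, hyε⟩
    have hpos : 0 < dist (y : S) (x : S) := dist_pos.mpr (fun h => hyx (Subtype.ext h))
    obtain ⟨w, hwV, hwx, hwd⟩ := hVd (x : S) x.2 _ hpos
    exact ⟨⟨⟨w, hwV⟩, fun h => hwx (congrArg Subtype.val h), hwd.trans hyε⟩, hwd⟩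
  choose step hstepd using hstep
  obtain ⟨y₀V, hy₀V, hy₀x, hy₀d⟩ := hVd (x : S) x.2 ε hε
  set y₀ : {y : ↥V // y ≠ x ∧ dist (y : S) (x : S) < ε} :=
    ⟨⟨y₀V, hy₀V⟩, fun h => hy₀x (congrArg Subtype.val h), hy₀d⟩ with hy₀
  set f : ℕ → {y : ↥V // y ≠ x ∧ dist (y : S) (x : S) < ε} := fun n => step^[n] y₀ with hf
  have hanti : StrictAnti fun n => dist (((f n : ↥V)) : S) (x : S) := by
    apply strictAnti_nat_of_succ_lt
    intro n
    have hfs : f (n + 1) = step (f n) := Function.iterate_succ_apply' _ _ _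
    rw [hfs]
    exact hstepd (f n)
  refine ⟨fun n => (f n : ↥V), ?_, fun n => ⟨(f n).2.1, (f n).2.2⟩⟩
  intro m n h
  exact hanti.injective (congrArg (fun y : ↥V => dist (y : S) (x : S)) h)

lemma larg_key (hVd : DenseInItself V) (hδ : 0 < δ) {p : ℝ} (hp : p ∈ Set.Ioo (0 : ℝ) 1)
    (μ : MeasureTheory.Measure (↥(LargEdges V δ) → Bool)) [MeasureTheory.IsProbabilityMeasure μ]
    (hμ : ∀ (F : Finset ↥(LargEdges V δ)) (b : ↥(LargEdges V δ) → Bool),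
      μ {ω | ∀ e ∈ F, ω e = b e} =
        ∏ e ∈ F, (if b e = true then ENNReal.ofReal p else ENNReal.ofReal (1 - p)))
    {δ' : ℝ} (hδ'0 : 0 < δ') {x : ↥V} {A B : Finset ↥V}
    (hAB : Disjoint A B) (hxA : x ∉ A) (hxB : x ∉ B)
    (hdist : ∀ u : ↥V, u ∈ A ∨ u ∈ B → dist (u : S) (x : S) < δ) :
    ∃ M : Set (↥(LargEdges V δ) → Bool), MeasurableSet M ∧ μ M = 1 ∧
      ∀ ω ∈ M, ∃ z : ↥V, z ∉ A ∧ z ∉ B ∧ z ≠ x ∧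
        (∀ a ∈ A, (largGraph V δ ω).Adj z a) ∧ (∀ b ∈ B, ¬ (largGraph V δ ω).Adj z b) ∧
        (∀ u : ↥V, u ∈ A ∨ u ∈ B → dist (u : S) (z : S) < δ) ∧ dist (x : S) (z : S) < δ' := by
  classical
  set T : Finset ℝ :=
    insert δ' ((A ∪ B).image fun u : ↥V => min (dist (u : S) (x : S)) (δ - dist (u : S) (x : S)))
    with hT
  have hTne : T.Nonempty := ⟨δ', Finset.mem_insert_self _ _⟩
  set ε := T.min' hTne with hε
  have hxAB : ∀ u : ↥V, u ∈ A ∪ B → u ≠ x := by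
    intro u hu h; subst h
    rcases Finset.mem_union.mp hu with h | h
    exacts [hxA h, hxB h]
  have hε0 : 0 < ε := by
    apply (Finset.lt_min'_iff _ _).mpr
    intro y hy
    rcases Finset.mem_insert.mp hy with rfl | hy
    · exact hδ'0
    · obtain ⟨u, hu, rfl⟩ := Finset.mem_image.mp hy
      refine lt_min ?_ ?_
      · exact dist_pos.mpr (fun h => hxAB u hu (Subtype.ext h))
      · have := hdist u (Finset.mem_union.mp hu)
        linarith
  have hεδ' : ε ≤ δ' := Finset.min'_le _ _ (Finset.mem_insert_self _ _)
  have hεu : ∀ u ∈ A ∪ B, ε ≤ min (dist (u : S) (x : S)) (δ - dist (u : S) (x : S)) :=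
    fun u hu => Finset.min'_le _ _ (Finset.mem_insert_of_mem (Finset.mem_image_of_mem _ hu))
  obtain ⟨z, hzinj, hz⟩ := exists_inj_seq hVd x hε0
  have hznAB : ∀ n, ∀ u ∈ A ∪ B, z n ≠ u := by
    intro n u hu h
    have h1 : dist ((z n : S)) (x : S) < ε := (hz n).2
    have h2 : ε ≤ dist (u : S) (x : S) := (hεu u hu).trans (min_le_left _ _)
    rw [h] at h1
    exact absurd (h1.trans_le h2) (lt_irrefl _)
  have hznA : ∀ n, z n ∉ A := fun n hA => hznAB n _ (Finset.mem_union_left _ hA) rfl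
  have hznB : ∀ n, z n ∉ B := fun n hB => hznAB n _ (Finset.mem_union_right _ hB) rfl
  have hdzu : ∀ n, ∀ u ∈ A ∪ B, dist ((u : ↥V) : S) ((z n : S)) < δ := by
    intro n u hu
    have h2 : ε ≤ δ - dist (u : S) (x : S) := (hεu u hu).trans (min_le_right _ _)
    have h3 : dist ((z n : S)) (x : S) < ε := (hz n).2
    have h4 := dist_triangle (u : S) (x : S) ((z n : S))
    have h5 : dist (x : S) ((z n : S)) = dist ((z n : S)) (x : S) := dist_comm _ _
    linarith
  have hedge : ∀ n, ∀ u, u ∈ A ∪ B → s(z n, u) ∈ LargEdges V δ := fun n u hu =>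
    mem_largEdges_of (hznAB n u hu) (by rw [dist_comm]; exact hdzu n u hu)
  set F : ℕ → Finset ↥(LargEdges V δ) := fun n =>
    (A ∪ B).attach.image fun u => (⟨s(z n, u.1), hedge n u.1 u.2⟩ : ↥(LargEdges V δ)) with hF
  set b : ↥(LargEdges V δ) → Bool := fun e =>
    if (∃ a ∈ A, a ∈ (e : Sym2 ↥V)) then true else false with hb
  set E : ℕ → Set (↥(LargEdges V δ) → Bool) := fun n => {ω | ∀ e ∈ F n, ω e = b e} with hE
  have hmemF : ∀ n, ∀ u, ∀ hu : u ∈ A ∪ B,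
      (⟨s(z n, u), hedge n u hu⟩ : ↥(LargEdges V δ)) ∈ F n := by
    intro n u hu
    exact Finset.mem_image.mpr ⟨⟨u, hu⟩, Finset.mem_attach _ _, rfl⟩
  have hbval : ∀ n, ∀ u, ∀ _hu : u ∈ A ∪ B, ∀ h : s(z n, u) ∈ LargEdges V δ,
      b ⟨s(z n, u), h⟩ = (if u ∈ A then true else false) := by
    intro n u hu h
    by_cases huA : u ∈ A
    · rw [if_pos huA]
      simp only [hb]
      rw [if_pos]
      exact ⟨u, huA, by rw [Sym2.mem_iff]; right; rfl⟩
    · rw [if_neg huA]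
      simp only [hb]
      rw [if_neg]
      rintro ⟨a, haA, hamem⟩
      rcases Sym2.mem_iff.mp hamem with rfl | rfl
      · exact hznA n haA
      · exact huA haA
  have hEmeas : ∀ n, MeasurableSet (E n) := by
    intro n
    have hEn : E n = ⋂ e ∈ F n, {ω : ↥(LargEdges V δ) → Bool | ω e = b e} := by
      ext ω; simp [hE]
    rw [hEn]
    refine Set.Finite.measurableSet_biInter (Finset.finite_toSet _) fun e _ => ?_
    have : {ω : ↥(LargEdges V δ) → Bool | ω e = b e} = (fun ω => ω e) ⁻¹' {b e} := rfl
    rw [this]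
    exact measurable_pi_apply e (measurableSet_singleton (b e))
  set c : ENNReal := ENNReal.ofReal (min p (1 - p)) with hc
  have hc0 : c ≠ 0 := by
    rw [hc]
    simp only [ne_eq, ENNReal.ofReal_eq_zero, not_le]
    rcases hp with ⟨hp0, hp1⟩
    exact lt_min hp0 (by linarith)
  have hw : ∀ e : ↥(LargEdges V δ),
      c ≤ (if b e = true then ENNReal.ofReal p else ENNReal.ofReal (1 - p)) := by
    intro e
    split
    · exact ENNReal.ofReal_le_ofReal (min_le_left _ _)
    · exact ENNReal.ofReal_le_ofReal (min_le_right _ _)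
  have hcardF : ∀ n, (F n).card = (A ∪ B).card := by
    intro n
    rw [hF]
    rw [Finset.card_image_of_injective _ ?_, Finset.card_attach]
    rintro ⟨u, hu⟩ ⟨u', hu'⟩ h
    have h' : s(z n, u) = s(z n, u') := congrArg Subtype.val h
    rcases Sym2.eq_iff.mp h' with ⟨-, h2⟩ | ⟨h1, -⟩
    · exact Subtype.ext h2
    · exact absurd h1 (hznAB n u' hu')
  have hμE : ∀ n, μ (E n) =
      ∏ e ∈ F n, (if b e = true then ENNReal.ofReal p else ENNReal.ofReal (1 - p)) :=
    fun n => hμ (F n) b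
  have hμElb : ∀ n, c ^ (A ∪ B).card ≤ μ (E n) := by
    intro n
    rw [hμE n, ← hcardF n]
    calc c ^ (F n).card = ∏ _e ∈ F n, c := by rw [Finset.prod_const]
      _ ≤ _ := Finset.prod_le_prod' (fun e _ => hw e)
  have hFdisj : ∀ m n, m ≠ n → Disjoint (F m) (F n) := by
    intro m n hmn
    rw [Finset.disjoint_left]
    intro e hem hen
    obtain ⟨⟨u, hu⟩, -, rfl⟩ := Finset.mem_image.mp hem
    obtain ⟨⟨u', hu'⟩, -, he'⟩ := Finset.mem_image.mp hen
    have h' : s(z n, u') = s(z m, u) := congrArg Subtype.val he'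
    rcases Sym2.eq_iff.mp h' with ⟨h1, -⟩ | ⟨h1, -⟩
    · exact hmn (hzinj h1).symm
    · exact hznAB n u hu h1
  have hindep : iIndepSet E μ := by
    rw [ProbabilityTheory.iIndepSet_iff_meas_biInter hEmeas]
    intro t
    have h1 : (⋂ i ∈ t, E i) = {ω | ∀ e ∈ t.biUnion F, ω e = b e} := by
      ext ω
      simp only [Set.mem_iInter, hE, Set.mem_setOf_eq, Finset.mem_biUnion]
      constructor
      · rintro h e ⟨i, hit, hei⟩
        exact h i hit e hei
      · intro h i hit e hei
        exact h e ⟨i, hit, hei⟩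
    rw [h1, hμ (t.biUnion F) b,
      Finset.prod_biUnion (fun i _ j _ hij => hFdisj i j hij)]
    exact Finset.prod_congr rfl fun i _ => (hμE i).symm
  have htsum : (∑' n, μ (E n)) = (⊤ : ENNReal) := by
    rw [eq_top_iff]
    calc (⊤ : ENNReal) = ∑' _ : ℕ, c ^ (A ∪ B).card :=
        (ENNReal.tsum_const_eq_top_of_ne_zero (pow_ne_zero _ hc0)).symm
      _ ≤ ∑' n, μ (E n) := ENNReal.tsum_le_tsum hμElb
  have hlimsup := ProbabilityTheory.measure_limsup_eq_one hEmeas hindep htsum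
  refine ⟨⋃ n, E n, MeasurableSet.iUnion hEmeas, ?_, ?_⟩
  · refine le_antisymm prob_le_one ?_
    rw [← hlimsup]
    apply measure_mono
    rw [Filter.limsup_eq_iInf_iSup_of_nat]
    refine le_trans (iInf_le _ 0) ?_
    exact iSup₂_le fun i _ => le_iSup E i
  · intro ω hω
    obtain ⟨n, hωn⟩ := Set.mem_iUnion.mp hω
    refine ⟨z n, hznA n, hznB n, (hz n).1, ?_, ?_, ?_, ?_⟩
    · intro a ha
      have hu : a ∈ A ∪ B := Finset.mem_union_left _ ha
      refine ⟨hedge n a hu, ?_⟩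
      have h1 := hωn _ (hmemF n a hu)
      rw [h1, hbval n a hu _]
      rw [if_pos ha]
    · rintro v hv ⟨h, hωe⟩
      have hu : v ∈ A ∪ B := Finset.mem_union_right _ hv
      have h1 := hωn _ (hmemF n v hu)
      have h2 := hbval n v hu (hedge n v hu)
      have hvA : v ∉ A := fun hvA => (Finset.disjoint_left.mp hAB hvA) hv
      rw [if_neg hvA] at h2
      rw [h2] at h1
      have h3 : (true : Bool) = false := hωe.symm.trans h1
      simp at h3
    · intro u hu
      refine hdzu n u ?_
      rcases hu with h | h
      exacts [Finset.mem_union_left _ h, Finset.mem_union_right _ h]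
    · rw [dist_comm]
      exact ((hz n).2).trans_le hεδ'

end AuxLarg

theorem larg_is_gec {S : Type*} [MetricSpace S] (V : Set S) (hVc : V.Countable)
    (hVd : DenseInItself V) (δ : ℝ) (hδ : 0 < δ) (p : ℝ) (hp : p ∈ Set.Ioo (0 : ℝ) 1)
    (μ : MeasureTheory.Measure (↥(LargEdges V δ) → Bool)) [MeasureTheory.IsProbabilityMeasure μ]
    (hμ : ∀ (F : Finset ↥(LargEdges V δ)) (b : ↥(LargEdges V δ) → Bool),
      μ {ω | ∀ e ∈ F, ω e = b e} =
        ∏ e ∈ F, (if b e = true then ENNReal.ofReal p else ENNReal.ofReal (1 - p))) :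
    μ {ω | IsGEC (largGraph V δ ω) δ} = 1 := by
  classical
  have hVcount : Countable ↥V := hVc.to_subtype
  have key : ∀ i : ℚ × ↥V × Finset ↥V × Finset ↥V,
      ∃ M : Set (↥(LargEdges V δ) → Bool), MeasurableSet M ∧ μ M = 1 ∧
      ((Disjoint i.2.2.1 i.2.2.2 ∧ i.2.1 ∉ i.2.2.1 ∧ i.2.1 ∉ i.2.2.2 ∧ 0 < ((i.1 : ℚ) : ℝ) ∧
        (∀ u : ↥V, u ∈ i.2.2.1 ∨ u ∈ i.2.2.2 → dist (u : S) ((i.2.1 : ↥V) : S) < δ)) →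
        ∀ ω ∈ M, ∃ z : ↥V, z ∉ i.2.2.1 ∧ z ∉ i.2.2.2 ∧ z ≠ i.2.1 ∧
          (∀ a ∈ i.2.2.1, (largGraph V δ ω).Adj z a) ∧
          (∀ b ∈ i.2.2.2, ¬ (largGraph V δ ω).Adj z b) ∧
          (∀ u : ↥V, u ∈ i.2.2.1 ∨ u ∈ i.2.2.2 → dist (u : S) (z : S) < δ) ∧
          dist ((i.2.1 : ↥V) : S) (z : S) < ((i.1 : ℚ) : ℝ)) := by
    rintro ⟨q, x, A, B⟩
    by_cases hcond : Disjoint A B ∧ x ∉ A ∧ x ∉ B ∧ 0 < ((q : ℚ) : ℝ) ∧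
        (∀ u : ↥V, u ∈ A ∨ u ∈ B → dist (u : S) (x : S) < δ)
    · obtain ⟨h1, h2, h3, h4, h5⟩ := hcond
      obtain ⟨M, hM1, hM2, hM3⟩ := larg_key hVd hδ hp μ hμ h4 h1 h2 h3 h5
      exact ⟨M, hM1, hM2, fun _ => hM3⟩
    · exact ⟨Set.univ, MeasurableSet.univ, measure_univ, fun h => absurd h hcond⟩
  choose M hM1 hM2 hM3 using key
  have hKc : μ (⋂ i, M i)ᶜ = 0 := by
    rw [Set.compl_iInter]
    refine le_antisymm (le_trans (measure_iUnion_le _) ?_) zero_le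
    have h0 : ∀ i, μ (M i)ᶜ = 0 := fun i => by
      rw [measure_compl (hM1 i) (measure_ne_top μ _), hM2 i, measure_univ, tsub_self]
    simp [h0]
  have hK : (1 : ENNReal) ≤ μ (⋂ i, M i) := by
    have hcm := measure_compl (MeasurableSet.iInter hM1) (measure_ne_top μ _)
    rw [hKc, measure_univ] at hcm
    exact tsub_eq_zero_iff_le.mp hcm.symm
  refine le_antisymm prob_le_one ?_
  refine le_trans hK (measure_mono ?_)
  intro ω hω
  intro δ' hδ'0 hδ'δ x A B hd hxA hxB hdist
  obtain ⟨q, hq0, hqδ'⟩ := exists_rat_btwn hδ'0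
  obtain ⟨zz, hz1, hz2, hz3, hz4, hz5, hz6, hz7⟩ :=
    hM3 (q, x, A, B) ⟨hd, hxA, hxB, hq0, hdist⟩ ω (Set.mem_iInter.mp hω (q, x, A, B))
  exact ⟨zz, hz1, hz2, hz3, hz4, hz5, hz6, hz7.trans hqδ'⟩
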